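/- Let A₁,...,Aₙ ∈ M(2n,ℂ) be block-diagonal matrices, where each A_i consists of an upper-left (2n−2)×(2n−2) block B_i and a lower-right 2×2 block C_i (all off-block entries zero). Then Q(A₁,...,Aₙ) = ∑_{i=1}^{n} Q(B₁,...,B̂_i,...,Bₙ) · Q(C_i), where B̂_i denotes omission of B_i. -/
import Mathlib


open Matrix

/-- The function `Q` on `n` matrices of size `2n × 2n`. -/
noncomputable def Qgen (n : ℕ) (A : Fin n → Matrix (Fin (2*n)) (Fin (2*n)) ℂ) : ℂ :=
  ∑ σ : Equiv.Perm (Fin (2*n)),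
    ((Equiv.Perm.sign σ : ℤ) : ℂ) *
      ∏ i : Fin n,
        (A i (σ ⟨2*(i:ℕ), by have := i.isLt; omega⟩) (σ ⟨2*(i:ℕ)+1, by have := i.isLt; omega⟩)
          - A i (σ ⟨2*(i:ℕ)+1, by have := i.isLt; omega⟩) (σ ⟨2*(i:ℕ), by have := i.isLt; omega⟩))

namespace Stmt3Aux

open Equiv

variable {m : ℕ}

def eSum (m : ℕ) : Fin (2*m) ⊕ Fin 2 ≃ Fin (2*(m+1)) :=
  finSumFinEquiv.trans (finCongr (by omega))

def pe (m : ℕ) : Fin (m+1) × Fin 2 ≃ Fin (2*(m+1)) :=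
  finProdFinEquiv.trans (finCongr (by omega))

def pe' (m : ℕ) : Fin m × Fin 2 ≃ Fin (2*m) :=
  finProdFinEquiv.trans (finCongr (by omega))

lemma pe_apply (j : Fin (m+1)) (k : Fin 2) : (pe m (j,k) : ℕ) = 2*(j:ℕ)+(k:ℕ) := by
  simp [pe, finProdFinEquiv]; omega

lemma pe'_apply (j : Fin m) (k : Fin 2) : (pe' m (j,k) : ℕ) = 2*(j:ℕ)+(k:ℕ) := by
  simp [pe', finProdFinEquiv]; omega

lemma eSum_inl (x : Fin (2*m)) : (eSum m (.inl x) : ℕ) = (x:ℕ) := by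
  simp only [eSum, Equiv.trans_apply, finCongr_apply, Fin.coe_cast]
  rw [finSumFinEquiv_apply_left]; simp

lemma eSum_inr (k : Fin 2) : (eSum m (.inr k) : ℕ) = 2*m+(k:ℕ) := by
  simp only [eSum, Equiv.trans_apply, finCongr_apply, Fin.coe_cast]
  rw [finSumFinEquiv_apply_right]; simp

def rotF (m i j : ℕ) : ℕ := if j < i then j else if j = i then m else j - 1
def rotG (m i j : ℕ) : ℕ := if j < i then j else if j = m then i else j + 1

def rot (i₀ : Fin (m+1)) : Perm (Fin (m+1)) where
  toFun j := ⟨rotF m i₀ j, by have := j.isLt; have := i₀.isLt; unfold rotF; split_ifs <;> omega⟩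
  invFun j := ⟨rotG m i₀ j, by have := j.isLt; have := i₀.isLt; unfold rotG; split_ifs <;> omega⟩
  left_inv j := Fin.ext (by
    have := j.isLt; have := i₀.isLt
    show rotG m i₀ (rotF m i₀ j) = (j:ℕ)
    unfold rotF rotG; split_ifs <;> omega)
  right_inv j := Fin.ext (by
    have := j.isLt; have := i₀.isLt
    show rotF m i₀ (rotG m i₀ j) = (j:ℕ)
    unfold rotF rotG; split_ifs <;> omega)

lemma rot_val (i₀ j : Fin (m+1)) : ((rot i₀ j : Fin (m+1)) : ℕ) = rotF m i₀ j := rfl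

lemma val_succAbove (i₀ : Fin (m+1)) (j : Fin m) :
    ((i₀.succAbove j : Fin (m+1)) : ℕ) = if (j:ℕ) < (i₀:ℕ) then (j:ℕ) else (j:ℕ)+1 := by
  simp only [Fin.succAbove, apply_ite Fin.val, Fin.coe_castSucc, Fin.val_succ, Fin.lt_def]

lemma rot_self (i₀ : Fin (m+1)) : rot i₀ i₀ = Fin.last m := by
  apply Fin.ext
  rw [rot_val, Fin.val_last]
  unfold rotF; split_ifs <;> omega

lemma rot_succAbove (i₀ : Fin (m+1)) (j : Fin m) :
    rot i₀ (i₀.succAbove j) = j.castSucc := by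
  apply Fin.ext
  rw [rot_val, Fin.coe_castSucc]
  have h := val_succAbove i₀ j
  have := j.isLt; have := i₀.isLt
  unfold rotF; rw [h]; split_ifs <;> omega


lemma eSum_inl_pe' (j : Fin m) (k : Fin 2) :
    eSum m (.inl (pe' m (j,k))) = pe m (j.castSucc, k) := by
  apply Fin.ext
  rw [eSum_inl, pe'_apply, pe_apply, Fin.coe_castSucc]

lemma eSum_inr_pe (k : Fin 2) : eSum m (.inr k) = pe m (Fin.last m, k) := by
  apply Fin.ext
  rw [eSum_inr, pe_apply, Fin.val_last]

def bperm (i₀ : Fin (m+1)) : Perm (Fin (2*(m+1))) :=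
  (pe m).permCongr (Equiv.prodCongrLeft (fun _ : Fin 2 => rot i₀))

lemma bperm_apply (i₀ : Fin (m+1)) (j : Fin (m+1)) (k : Fin 2) :
    bperm i₀ (pe m (j,k)) = pe m (rot i₀ j, k) := by
  simp [bperm, Equiv.permCongr_apply, Equiv.prodCongrLeft]

lemma bperm_symm_apply (i₀ : Fin (m+1)) (j : Fin (m+1)) (k : Fin 2) :
    (bperm i₀)⁻¹ (pe m (rot i₀ j, k)) = pe m (j, k) := by
  rw [← bperm_apply i₀ j k]
  simp

lemma sign_bperm (i₀ : Fin (m+1)) : Equiv.Perm.sign (bperm i₀) = 1 := by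
  rw [bperm, Equiv.Perm.sign_permCongr, Equiv.Perm.sign_prodCongrLeft]
  rw [Fin.prod_univ_two]
  exact Int.units_mul_self _

def Phi (i₀ : Fin (m+1)) (τ : Perm (Fin (2*m))) (c : Perm (Fin 2)) :
    Perm (Fin (2*(m+1))) :=
  ((eSum m).permCongr (Equiv.sumCongr τ c)) * bperm i₀

lemma sign_Phi (i₀ : Fin (m+1)) (τ : Perm (Fin (2*m))) (c : Perm (Fin 2)) :
    Equiv.Perm.sign (Phi i₀ τ c) = Equiv.Perm.sign τ * Equiv.Perm.sign c := by
  rw [Phi, _root_.map_mul, sign_bperm, Equiv.Perm.sign_permCongr, Equiv.Perm.sign_sumCongr, mul_one]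

lemma Phi_apply_self (i₀ : Fin (m+1)) (τ : Perm (Fin (2*m))) (c : Perm (Fin 2)) (k : Fin 2) :
    Phi i₀ τ c (pe m (i₀, k)) = eSum m (.inr (c k)) := by
  rw [Phi, Equiv.Perm.mul_apply, bperm_apply, rot_self, ← eSum_inr_pe]
  simp [Equiv.permCongr_apply]

lemma Phi_apply_other (i₀ : Fin (m+1)) (τ : Perm (Fin (2*m))) (c : Perm (Fin 2))
    (j : Fin m) (k : Fin 2) :
    Phi i₀ τ c (pe m (i₀.succAbove j, k)) = eSum m (.inl (τ (pe' m (j,k)))) := by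
  rw [Phi, Equiv.Perm.mul_apply, bperm_apply, rot_succAbove, ← eSum_inl_pe']
  simp [Equiv.permCongr_apply]


lemma perm_sum_decompose {α β : Type*} [Finite α] [Finite β] (q : Perm (α ⊕ β))
    (h1 : ∀ a, (q (.inl a)).isLeft) (h2 : ∀ b, (q (.inr b)).isRight) :
    ∃ (τ : Perm α) (c : Perm β), q = Equiv.sumCongr τ c := by
  have h1' : ∀ a, ∃ y, q (.inl a) = .inl y := fun a => Sum.isLeft_iff.mp (h1 a)
  have h2' : ∀ b, ∃ y, q (.inr b) = .inr y := fun b => Sum.isRight_iff.mp (h2 b)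
  choose f hf using h1'
  choose g hg using h2'
  have hfinj : Function.Injective f := by
    intro a₁ a₂ h
    have : q (.inl a₁) = q (.inl a₂) := by rw [hf, hf, h]
    exact Sum.inl_injective (q.injective this)
  have hginj : Function.Injective g := by
    intro b₁ b₂ h
    have : q (.inr b₁) = q (.inr b₂) := by rw [hg, hg, h]
    exact Sum.inr_injective (q.injective this)
  refine ⟨Equiv.ofBijective f (Finite.injective_iff_bijective.mp hfinj),
    Equiv.ofBijective g (Finite.injective_iff_bijective.mp hginj), ?_⟩
  ext x
  cases x with
  | inl a => simp [hf, Equiv.ofBijective]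
  | inr b => simp [hg, Equiv.ofBijective]


set_option maxHeartbeats 1000000 in
lemma Phi_injective (i₀ i₁ : Fin (m+1)) (τ₀ τ₁ : Perm (Fin (2*m))) (c₀ c₁ : Perm (Fin 2))
    (h : Phi i₀ τ₀ c₀ = Phi i₁ τ₁ c₁) : i₀ = i₁ ∧ τ₀ = τ₁ ∧ c₀ = c₁ := by
  have hi : i₀ = i₁ := by
    by_contra hne
    obtain ⟨j, hj⟩ := Fin.exists_succAbove_eq hne
    have h1 : Phi i₀ τ₀ c₀ (pe m (i₀, 0)) = eSum m (.inr (c₀ 0)) := Phi_apply_self _ _ _ _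
    have h2 : Phi i₁ τ₁ c₁ (pe m (i₀, 0)) = eSum m (.inl (τ₁ (pe' m (j, 0)))) := by
      rw [← hj]; exact Phi_apply_other _ _ _ _ _
    rw [h, h2] at h1
    exact absurd ((eSum m).injective h1) (by simp)
  subst hi
  have hc : c₀ = c₁ := by
    ext k
    have h1 := Phi_apply_self i₀ τ₀ c₀ k
    have h2 := Phi_apply_self i₀ τ₁ c₁ k
    rw [h, h2] at h1
    exact congrArg Fin.val (Sum.inr_injective ((eSum m).injective h1)).symm
  have ht : τ₀ = τ₁ := by
    ext x
    obtain ⟨⟨j, k⟩, rfl⟩ := (pe' m).surjective x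
    have h1 := Phi_apply_other i₀ τ₀ c₀ j k
    have h2 := Phi_apply_other i₀ τ₁ c₁ j k
    rw [h, h2] at h1
    exact congrArg Fin.val (Sum.inl_injective ((eSum m).injective h1)).symm
  exact ⟨rfl, ht, hc⟩


variable {B0 : Matrix (Fin (2*m)) (Fin (2*m)) ℂ} {C0 : Matrix (Fin 2) (Fin 2) ℂ}

lemma entry_ll (a b : Fin (2*m)) :
    (Matrix.reindex (eSum m) (eSum m) (Matrix.fromBlocks B0 0 0 C0))
      (eSum m (.inl a)) (eSum m (.inl b)) = B0 a b := by
  simp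

lemma entry_rr (a b : Fin 2) :
    (Matrix.reindex (eSum m) (eSum m) (Matrix.fromBlocks B0 0 0 C0))
      (eSum m (.inr a)) (eSum m (.inr b)) = C0 a b := by
  simp

lemma entry_mixed (x y : Fin (2*(m+1)))
    (h : ((eSum m).symm x).isLeft ≠ ((eSum m).symm y).isLeft) :
    (Matrix.reindex (eSum m) (eSum m) (Matrix.fromBlocks B0 0 0 C0)) x y = 0 := by
  rw [Matrix.reindex_apply, Matrix.submatrix_apply]
  rcases hx : (eSum m).symm x with a | a <;> rcases hy : (eSum m).symm y with b | b <;>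
    simp_all


lemma pos0 (i : Fin (m+1)) (h : 2*(i:ℕ) < 2*(m+1)) :
    (⟨2*(i:ℕ), h⟩ : Fin (2*(m+1))) = pe m (i, 0) := by
  apply Fin.ext; rw [pe_apply]; rfl

lemma pos1 (i : Fin (m+1)) (h : 2*(i:ℕ)+1 < 2*(m+1)) :
    (⟨2*(i:ℕ)+1, h⟩ : Fin (2*(m+1))) = pe m (i, 1) := by
  apply Fin.ext; rw [pe_apply]; rfl

lemma pos0' (j : Fin m) (h : 2*(j:ℕ) < 2*m) :
    (⟨2*(j:ℕ), h⟩ : Fin (2*m)) = pe' m (j, 0) := by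
  apply Fin.ext; rw [pe'_apply]; rfl

lemma pos1' (j : Fin m) (h : 2*(j:ℕ)+1 < 2*m) :
    (⟨2*(j:ℕ)+1, h⟩ : Fin (2*m)) = pe' m (j, 1) := by
  apply Fin.ext; rw [pe'_apply]; rfl

noncomputable def Fterm (A : Fin (m+1) → Matrix (Fin (2*(m+1))) (Fin (2*(m+1))) ℂ)
    (σ : Perm (Fin (2*(m+1)))) (i : Fin (m+1)) : ℂ :=
  A i (σ (pe m (i,0))) (σ (pe m (i,1))) - A i (σ (pe m (i,1))) (σ (pe m (i,0)))

noncomputable def Ffun (A : Fin (m+1) → Matrix (Fin (2*(m+1))) (Fin (2*(m+1))) ℂ)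
    (σ : Perm (Fin (2*(m+1)))) : ℂ :=
  ((Equiv.Perm.sign σ : ℤ) : ℂ) * ∏ i, Fterm A σ i

lemma Qgen_succ_eq (A : Fin (m+1) → Matrix (Fin (2*(m+1))) (Fin (2*(m+1))) ℂ) :
    Qgen (m+1) A = ∑ σ, Ffun A σ := by
  unfold Qgen Ffun Fterm
  simp only [pos0, pos1]

lemma Qgen_m_eq (D : Fin m → Matrix (Fin (2*m)) (Fin (2*m)) ℂ) :
    Qgen m D = ∑ τ : Perm (Fin (2*m)), ((Equiv.Perm.sign τ : ℤ) : ℂ) *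
      ∏ j : Fin m, (D j (τ (pe' m (j,0))) (τ (pe' m (j,1)))
        - D j (τ (pe' m (j,1))) (τ (pe' m (j,0)))) := by
  unfold Qgen
  simp only [pos0', pos1']

lemma Qgen_one (C0 : Matrix (Fin 2) (Fin 2) ℂ) :
    Qgen 1 (fun _ => C0) = ∑ c : Equiv.Perm (Fin 2),
      ((Equiv.Perm.sign c : ℤ) : ℂ) * (C0 (c 0) (c 1) - C0 (c 1) (c 0)) := by
  show (∑ c : Equiv.Perm (Fin 2),
    ((Equiv.Perm.sign c : ℤ) : ℂ) *
      ∏ i : Fin 1,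
        ((fun _ => C0) i (c ⟨2*(i:ℕ), by omega⟩) (c ⟨2*(i:ℕ)+1, by omega⟩)
          - (fun _ => C0) i (c ⟨2*(i:ℕ)+1, by omega⟩) (c ⟨2*(i:ℕ), by omega⟩))) = _
  refine Finset.sum_congr rfl fun c _ => ?_
  congr 1
  rw [Fin.prod_univ_one]
  norm_num


lemma exists_Phi_of_ne (A : Fin (m+1) → Matrix (Fin (2*(m+1))) (Fin (2*(m+1))) ℂ)
    (B : Fin (m+1) → Matrix (Fin (2*m)) (Fin (2*m)) ℂ)
    (C : Fin (m+1) → Matrix (Fin 2) (Fin 2) ℂ)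
    (hA : ∀ i, A i = Matrix.reindex (eSum m) (eSum m) (Matrix.fromBlocks (B i) 0 0 (C i)))
    (σ : Perm (Fin (2*(m+1)))) (hF : Ffun A σ ≠ 0) :
    ∃ i₀ τ c, σ = Phi i₀ τ c := by
  classical
  have hprod : ∀ i, Fterm A σ i ≠ 0 := by
    intro i hi
    apply hF
    unfold Ffun
    rw [Finset.prod_eq_zero (Finset.mem_univ i) hi, mul_zero]
  have hmatch : ∀ i : Fin (m+1),
      ((eSum m).symm (σ (pe m (i,0)))).isLeft = ((eSum m).symm (σ (pe m (i,1)))).isLeft := by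
    intro i
    by_contra hne
    apply hprod i
    unfold Fterm
    rw [hA i, entry_mixed _ _ hne, entry_mixed _ _ (Ne.symm hne)]
    simp
  obtain ⟨⟨i₀, k₀⟩, hp⟩ := (pe m).surjective (σ.symm (eSum m (.inr 0)))
  have hk₀ : ((eSum m).symm (σ (pe m (i₀,k₀)))).isLeft = false := by
    rw [hp]; simp
  have hfalse : ∀ k, ((eSum m).symm (σ (pe m (i₀,k)))).isLeft = false := by
    intro k
    have hkk : ((eSum m).symm (σ (pe m (i₀,k)))).isLeft
        = ((eSum m).symm (σ (pe m (i₀,k₀)))).isLeft := by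
      fin_cases k <;> fin_cases k₀ <;>
        first | rfl | exact hmatch i₀ | exact (hmatch i₀).symm
    rw [hkk, hk₀]
  have getr : ∀ x : Fin (2*m) ⊕ Fin 2, x.isLeft = false → ∃ b, x = .inr b := by
    intro x hx; cases x <;> simp_all
  have htrue : ∀ (j : Fin m) (k : Fin 2),
      ((eSum m).symm (σ (pe m (i₀.succAbove j, k)))).isLeft = true := by
    intro j k
    by_contra hL
    rw [Bool.not_eq_true] at hL
    have hLL : ∀ k', ((eSum m).symm (σ (pe m (i₀.succAbove j, k')))).isLeft = false := by
      intro k'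
      have hm := hmatch (i₀.succAbove j)
      fin_cases k <;> fin_cases k' <;> simp_all
    obtain ⟨a0, ha0⟩ := getr _ (hfalse 0)
    obtain ⟨a1, ha1⟩ := getr _ (hfalse 1)
    obtain ⟨b0, hb0⟩ := getr _ (hLL 0)
    obtain ⟨b1, hb1⟩ := getr _ (hLL 1)
    have hinj : ∀ (p q : Fin (m+1) × Fin 2),
        (eSum m).symm (σ (pe m p)) = (eSum m).symm (σ (pe m q)) → p = q := by
      intro p q h
      exact (pe m).injective (σ.injective ((eSum m).symm.injective h))
    have hne0 : i₀.succAbove j ≠ i₀ := Fin.succAbove_ne i₀ j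
    have d1 : a0 ≠ a1 := by
      intro h
      have := hinj (i₀,0) (i₀,1) (by rw [ha0, ha1, h])
      simp at this
    have d2 : a0 ≠ b0 := by
      intro h
      have := hinj (i₀,0) (i₀.succAbove j,0) (by rw [ha0, hb0, h])
      rw [Prod.ext_iff] at this
      exact hne0 this.1.symm
    have d3 : a1 ≠ b0 := by
      intro h
      have := hinj (i₀,1) (i₀.succAbove j,0) (by rw [ha1, hb0, h])
      rw [Prod.ext_iff] at this
      exact hne0 this.1.symm
    have e1 : (a0:ℕ) ≠ (a1:ℕ) := fun h => d1 (Fin.ext h)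
    have e2 : (a0:ℕ) ≠ (b0:ℕ) := fun h => d2 (Fin.ext h)
    have e3 : (a1:ℕ) ≠ (b0:ℕ) := fun h => d3 (Fin.ext h)
    have := a0.isLt; have := a1.isLt; have := b0.isLt
    omega
  have hbp : ∀ (j : Fin m) (k : Fin 2),
      (bperm i₀)⁻¹ (pe m (j.castSucc, k)) = pe m (i₀.succAbove j, k) := fun j k => by
    rw [← rot_succAbove i₀ j, bperm_symm_apply]
  have hbp' : ∀ k, (bperm i₀)⁻¹ (pe m (Fin.last m, k)) = pe m (i₀, k) := fun k => by
    rw [← rot_self i₀, bperm_symm_apply]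
  set q : Perm (Fin (2*m) ⊕ Fin 2) := Equiv.permCongr (eSum m).symm (σ * (bperm i₀)⁻¹)
    with hqdef
  have hql : ∀ a, ((q (.inl a)).isLeft : Prop) := by
    intro a
    obtain ⟨⟨j,k⟩, rfl⟩ := (pe' m).surjective a
    have hq1 : q (.inl (pe' m (j,k))) = (eSum m).symm (σ (pe m (i₀.succAbove j, k))) := by
      rw [hqdef]
      simp only [Equiv.permCongr_apply, Equiv.symm_symm, Equiv.Perm.mul_apply]
      rw [eSum_inl_pe', hbp]
    rw [hq1]
    exact htrue j k
  have hqr : ∀ b, ((q (.inr b)).isRight : Prop) := by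
    intro b
    have hq1 : q (.inr b) = (eSum m).symm (σ (pe m (i₀, b))) := by
      rw [hqdef]
      simp only [Equiv.permCongr_apply, Equiv.symm_symm, Equiv.Perm.mul_apply]
      rw [eSum_inr_pe, hbp']
    rw [hq1]
    obtain ⟨b', hb'⟩ := getr _ (hfalse b)
    rw [hb']
    rfl
  obtain ⟨τ, c, hq⟩ := perm_sum_decompose q hql hqr
  refine ⟨i₀, τ, c, ?_⟩
  have hback : Equiv.permCongr (eSum m) q = σ * (bperm i₀)⁻¹ := by
    rw [hqdef]
    ext x
    simp [Equiv.permCongr_apply]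
  rw [hq] at hback
  rw [Phi, hback, inv_mul_cancel_right]


lemma Ffun_Phi (A : Fin (m+1) → Matrix (Fin (2*(m+1))) (Fin (2*(m+1))) ℂ)
    (B : Fin (m+1) → Matrix (Fin (2*m)) (Fin (2*m)) ℂ)
    (C : Fin (m+1) → Matrix (Fin 2) (Fin 2) ℂ)
    (hA : ∀ i, A i = Matrix.reindex (eSum m) (eSum m) (Matrix.fromBlocks (B i) 0 0 (C i)))
    (i₀ : Fin (m+1)) (τ : Perm (Fin (2*m))) (c : Perm (Fin 2)) :
    Ffun A (Phi i₀ τ c) =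
      (((Equiv.Perm.sign τ : ℤ) : ℂ) *
        ∏ j : Fin m, (B (i₀.succAbove j) (τ (pe' m (j,0))) (τ (pe' m (j,1)))
          - B (i₀.succAbove j) (τ (pe' m (j,1))) (τ (pe' m (j,0))))) *
      (((Equiv.Perm.sign c : ℤ) : ℂ) * (C i₀ (c 0) (c 1) - C i₀ (c 1) (c 0))) := by
  unfold Ffun
  rw [Fin.prod_univ_succAbove (fun j => Fterm A (Phi i₀ τ c) j) i₀]
  have hself : Fterm A (Phi i₀ τ c) i₀ = C i₀ (c 0) (c 1) - C i₀ (c 1) (c 0) := by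
    unfold Fterm
    rw [Phi_apply_self, Phi_apply_self, hA i₀, entry_rr, entry_rr]
  have hother : ∀ j : Fin m, Fterm A (Phi i₀ τ c) (i₀.succAbove j)
      = B (i₀.succAbove j) (τ (pe' m (j,0))) (τ (pe' m (j,1)))
        - B (i₀.succAbove j) (τ (pe' m (j,1))) (τ (pe' m (j,0))) := by
    intro j
    unfold Fterm
    rw [Phi_apply_other, Phi_apply_other, hA, entry_ll, entry_ll]
  rw [hself, Finset.prod_congr rfl (fun j _ => hother j), sign_Phi]
  push_cast [Units.val_mul]
  ring

theorem key (B : Fin (m+1) → Matrix (Fin (2*m)) (Fin (2*m)) ℂ)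
    (C : Fin (m+1) → Matrix (Fin 2) (Fin 2) ℂ)
    (A : Fin (m+1) → Matrix (Fin (2*(m+1))) (Fin (2*(m+1))) ℂ)
    (hA : ∀ i, A i = Matrix.reindex (eSum m) (eSum m) (Matrix.fromBlocks (B i) 0 0 (C i))) :
    Qgen (m+1) A = ∑ i : Fin (m+1),
      Qgen m (fun j => B (i.succAbove j)) * Qgen 1 (fun _ => C i) := by
  classical
  rw [Qgen_succ_eq]
  have himage : ∀ σ ∈ (Finset.univ : Finset (Perm (Fin (2*(m+1))))),
      σ ∉ Finset.image
        (fun p : Fin (m+1) × Perm (Fin (2*m)) × Perm (Fin 2) => Phi p.1 p.2.1 p.2.2)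
        Finset.univ → Ffun A σ = 0 := by
    intro σ _ hσ
    by_contra hF
    obtain ⟨i, τ, c, h⟩ := exists_Phi_of_ne A B C hA σ hF
    exact hσ (Finset.mem_image.mpr ⟨(i,τ,c), Finset.mem_univ _, h.symm⟩)
  rw [← Finset.sum_subset (Finset.subset_univ _) himage]
  rw [Finset.sum_image (by
    intro p _ p' _ hpq
    obtain ⟨h1, h2, h3⟩ := Phi_injective _ _ _ _ _ _ hpq
    exact Prod.ext h1 (Prod.ext h2 h3))]
  rw [Fintype.sum_prod_type]
  refine Finset.sum_congr rfl fun i _ => ?_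
  rw [Fintype.sum_prod_type]
  rw [Qgen_m_eq, Qgen_one, Finset.sum_mul_sum]
  exact Finset.sum_congr rfl fun τ _ =>
    Finset.sum_congr rfl fun c _ => Ffun_Phi A B C hA i τ c

end Stmt3Aux

/-- Lemma 5 of the paper: if each `Aᵢ ∈ M(2n,ℂ)` is block diagonal with an upper-left
`(2n-2)×(2n-2)` block `Bᵢ` and a lower-right `2×2` block `Cᵢ`, then
`Q(A₁,...,Aₙ) = ∑ᵢ Q(B₁,...,B̂ᵢ,...,Bₙ) ⬝ Q(Cᵢ)`. -/
theorem stmt3 (n : ℕ) (hn : 1 ≤ n)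
    (B : Fin n → Matrix (Fin (2*(n-1))) (Fin (2*(n-1))) ℂ)
    (C : Fin n → Matrix (Fin 2) (Fin 2) ℂ)
    (A : Fin n → Matrix (Fin (2*n)) (Fin (2*n)) ℂ)
    (hA : ∀ i, A i = (Matrix.reindex
        (finSumFinEquiv.trans (finCongr (by omega : 2*(n-1) + 2 = 2*n)))
        (finSumFinEquiv.trans (finCongr (by omega : 2*(n-1) + 2 = 2*n))))
        (Matrix.fromBlocks (B i) 0 0 (C i))) :
    Qgen n A =
      ∑ i : Fin n,
        Qgen (n-1) (fun j : Fin (n-1) =>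
          if h : (j:ℕ) < (i:ℕ) then B ⟨j, by omega⟩
          else B ⟨(j:ℕ)+1, by have := j.isLt; omega⟩) * Qgen 1 (fun _ => C i) := by
  obtain ⟨m, rfl⟩ : ∃ m, n = m+1 := ⟨n-1, by omega⟩
  have hA' : ∀ i, A i = Matrix.reindex (Stmt3Aux.eSum m) (Stmt3Aux.eSum m)
      (Matrix.fromBlocks (B i) 0 0 (C i)) := hA
  have hkey := Stmt3Aux.key B C A hA'
  have hfam : ∀ i : Fin (m+1), (fun j : Fin m => B (i.succAbove j))
      = (fun j : Fin m => if h : (j:ℕ) < (i:ℕ) then B ⟨(j:ℕ), by omega⟩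
          else B ⟨(j:ℕ)+1, by have := j.isLt; omega⟩) := by
    intro i
    funext j
    have hv := Stmt3Aux.val_succAbove i j
    split_ifs with h
    · exact congrArg B (Fin.ext (by rw [hv]; simp [h]))
    · exact congrArg B (Fin.ext (by rw [hv]; simp [h]))
  refine hkey.trans (Finset.sum_congr rfl fun i _ => ?_)
  rw [hfam i]
  rfl
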